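/- Uniform spectral gap in the Dirichlet and Robin regimes: there exist λ > 0 and ε₀ ∈ (0,1) such that for all ε ∈ (0,ε₀) and all β ≤ 1: λ₀^{ε,β} ≥ λ₀^{ε,1} ≥ λ. -/

import Mathlib

open scoped Classical MeasureTheory
open Filter MeasureTheory Set

noncomputable section

def IsLipschitzDomain (d : ℕ) (Ω : Set (EuclideanSpace ℝ (Fin d))) : Prop :=
  IsOpen Ω ∧ IsConnected Ω ∧ Bornology.IsBounded Ω ∧
    ∀ p ∈ frontier Ω, ∃ U ∈ nhds p,
      ∃ (φ : EuclideanSpace ℝ (Fin d) ≃ᵢ EuclideanSpace ℝ (Fin d)) (j : Fin d)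
        (L : NNReal) (g : (Fin d → ℝ) → ℝ),
        LipschitzWith L g ∧
          ∀ x ∈ U, (x ∈ Ω ↔ g (fun i => if i = j then 0 else φ x i) < φ x j)

def latticePts (d : ℕ) (ε : ℝ) : Set (EuclideanSpace ℝ (Fin d)) :=
  {x | ∀ i, ∃ n : ℤ, x i = n * ε}

def gridSet (d : ℕ) (ε : ℝ) : Set (EuclideanSpace ℝ (Fin d)) :=
  ⋃ x ∈ latticePts d ε, ⋃ y ∈ latticePts d ε, ⋃ (_ : dist x y = ε), segment ℝ x y

def discDomain {d : ℕ} (Ω : Set (EuclideanSpace ℝ (Fin d))) (ε : ℝ) :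
    Set (EuclideanSpace ℝ (Fin d)) :=
  connectedComponentIn (Ω ∩ gridSet d ε) 0 ∩ latticePts d ε

def innerBdry {d : ℕ} (Ω : Set (EuclideanSpace ℝ (Fin d))) (ε : ℝ) :
    Set (EuclideanSpace ℝ (Fin d)) :=
  {x ∈ discDomain Ω ε | ({y ∈ discDomain Ω ε | dist x y = ε}).ncard < 2 * d}

/-- The data of discrete outer boundaries `∂_eΩ_ε`, absorption kernels `q_ε` and
boundary weights `α_ε`, together with all standing assumptions on them. -/
structure BoundarySetup (d : ℕ) (Ω : Set (EuclideanSpace ℝ (Fin d))) : Type where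
  extBdry : ℝ → Set (EuclideanSpace ℝ (Fin d))
  q : ℝ → EuclideanSpace ℝ (Fin d) → EuclideanSpace ℝ (Fin d) → ℝ
  α : ℝ → EuclideanSpace ℝ (Fin d) → ℝ
  C₀ : ℝ
  extBdry_finite : ∀ ε ∈ Set.Ioo (0:ℝ) 1, (extBdry ε).Finite
  extBdry_disj : ∀ ε ∈ Set.Ioo (0:ℝ) 1, extBdry ε ⊆ Ωᶜ
  q_nonneg : ∀ ε ∈ Set.Ioo (0:ℝ) 1, ∀ x ∈ innerBdry Ω ε, ∀ z, 0 ≤ q ε x z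
  q_support : ∀ ε ∈ Set.Ioo (0:ℝ) 1, ∀ x ∈ innerBdry Ω ε, ∀ z ∉ extBdry ε, q ε x z = 0
  q_prob : ∀ ε ∈ Set.Ioo (0:ℝ) 1, ∀ x ∈ innerBdry Ω ε, ∑ᶠ z ∈ extBdry ε, q ε x z = 1
  q_close : ∀ δ > (0:ℝ), ∃ ε₀ > (0:ℝ), ∀ ε ∈ Set.Ioo (0:ℝ) 1, ε < ε₀ →
      ∀ x ∈ innerBdry Ω ε, (∑ᶠ z ∈ extBdry ε, q ε x z * dist z x) < δ
  one_le_C₀ : 1 ≤ C₀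
  α_bounds : ∀ ε ∈ Set.Ioo (0:ℝ) 1, ∀ x ∈ innerBdry Ω ε, C₀⁻¹ ≤ α ε x ∧ α ε x ≤ C₀
  α_weak : ∀ F : Set (EuclideanSpace ℝ (Fin d) → ℝ),
      (∃ M : ℝ, ∀ f ∈ F, ∀ x, |f x| ≤ M) →
      UniformEquicontinuous (fun f : F => (f : EuclideanSpace ℝ (Fin d) → ℝ)) →
      ∀ δ > (0:ℝ), ∃ ε₀ > (0:ℝ), ∀ ε ∈ Set.Ioo (0:ℝ) 1, ε < ε₀ → ∀ f ∈ F,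
        |ε ^ ((d:ℝ) - 1) * ∑ᶠ x ∈ innerBdry Ω ε, α ε x * f x
          - ∫ x in frontier Ω, f x ∂(μH[(d:ℝ) - 1])| < δ

variable {d : ℕ} {Ω : Set (EuclideanSpace ℝ (Fin d))}

/-- The generator `A^{ε,β}` of the random walk, with boundary-rate coefficient `κ`
(`κ = ε^{β-2}` for `β ∈ ℝ`, and `κ = 0` for `β = ∞`). -/
def rwGen (S : BoundarySetup d Ω) (ε κ : ℝ) (f : EuclideanSpace ℝ (Fin d) → ℝ) :
    EuclideanSpace ℝ (Fin d) → ℝ := fun x =>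
  if x ∈ discDomain Ω ε then
    ε ^ (-2 : ℝ) * (∑ᶠ y ∈ {y ∈ discDomain Ω ε | dist x y = ε}, (f y - f x))
      + (if x ∈ innerBdry Ω ε then
          κ * ∑ᶠ z ∈ S.extBdry ε, S.α ε x * S.q ε x z * (f z - f x)
        else 0)
  else 0

/-- The semigroup `P^{ε,β}_t = exp(t A^{ε,β})`, defined pointwise by the exponential series. -/
def rwSemigroup (S : BoundarySetup d Ω) (ε κ t : ℝ)
    (f : EuclideanSpace ℝ (Fin d) → ℝ) : EuclideanSpace ℝ (Fin d) → ℝ := fun x =>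
  ∑' n : ℕ, (t ^ n / (n.factorial : ℝ)) * ((rwGen S ε κ)^[n] f x)

/-- The restriction operator `Π_ε`, extending by `0` outside `Ω_ε`. -/
def projDisc {d : ℕ} (Ω : Set (EuclideanSpace ℝ (Fin d))) (ε : ℝ)
    (f : EuclideanSpace ℝ (Fin d) → ℝ) : EuclideanSpace ℝ (Fin d) → ℝ := fun x =>
  if x ∈ discDomain Ω ε then f x else 0

/-- The surface average `⟨ϑ⟩_{∂Ω}` with respect to the `(d-1)`-dimensional Hausdorff
measure on `∂Ω`. -/
def surfAvg (d : ℕ) (Ω : Set (EuclideanSpace ℝ (Fin d)))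
    (ϑ : EuclideanSpace ℝ (Fin d) → ℝ) : ℝ :=
  ⨍ x in frontier Ω, ϑ x ∂(μH[(d:ℝ) - 1])

/-- The Dirichlet form `E^{ε,β}`. -/
def dirForm (S : BoundarySetup d Ω) (ε β : ℝ) (f : EuclideanSpace ℝ (Fin d) → ℝ) : ℝ :=
  ε ^ d / 2 * ∑ᶠ x ∈ discDomain Ω ε, ∑ᶠ y ∈ {y ∈ discDomain Ω ε | dist x y = ε},
      ε ^ (-2 : ℝ) * (f y - f x) ^ 2
    + ε ^ (β - 1) * (ε ^ ((d:ℝ) - 1) * ∑ᶠ x ∈ innerBdry Ω ε, S.α ε x * f x ^ 2)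

/-- The smallest eigenvalue `λ₀^{ε,β}` of minus the generator, i.e. the minimum of the
Dirichlet form over `L²(Ω_ε)`-normalized functions. -/
def lam0 (S : BoundarySetup d Ω) (ε β : ℝ) : ℝ :=
  sInf {r : ℝ | ∃ f : EuclideanSpace ℝ (Fin d) → ℝ,
    ε ^ d * (∑ᶠ x ∈ discDomain Ω ε, f x ^ 2) = 1 ∧ dirForm S ε β f = r}

lemma finsum_mem_eq_sum' {α : Type*} (f : α → ℝ) {s : Set α} (hs : s.Finite) :
    ∑ᶠ i ∈ s, f i = ∑ i ∈ hs.toFinset, f i := by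
  rw [← finsum_mem_coe_finset, Set.Finite.coe_toFinset]

lemma abs_coord_le_norm' {d : ℕ} (x : EuclideanSpace ℝ (Fin d)) (i : Fin d) : |x i| ≤ ‖x‖ := by
  rw [EuclideanSpace.norm_eq]
  have h1 : |x i| = Real.sqrt (‖x i‖ ^ 2) := by
    rw [Real.sqrt_sq_eq_abs, Real.norm_eq_abs, abs_abs]
  rw [h1]
  exact Real.sqrt_le_sqrt (Finset.single_le_sum (fun j _ => sq_nonneg ‖x j‖) (Finset.mem_univ i))

lemma lattice_bounded_finite {d : ℕ} {ε R : ℝ} (hε : 0 < ε) :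
    {x ∈ latticePts d ε | ‖x‖ < R}.Finite := by
  set N : ℤ := ⌈R / ε⌉ with hN
  set g : EuclideanSpace ℝ (Fin d) → (Fin d → ℤ) := fun x i => ⌈x i / ε⌉ with hg
  have hgx : ∀ x ∈ {x ∈ latticePts d ε | ‖x‖ < R}, ∀ i, x i = (g x i : ℝ) * ε := by
    intro x hx i
    obtain ⟨n, hn⟩ := hx.1 i
    have h' : x i / ε = (n : ℝ) := by rw [hn, mul_div_assoc, div_self hε.ne', mul_one]
    simp only [hg, h', Int.ceil_intCast]
    exact hn
  apply Set.Finite.of_finite_image (f := g) ?_ ?_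
  · apply Set.Finite.subset (Set.Finite.pi (fun _ : Fin d => Set.finite_Icc (-N) N))
    rintro v ⟨x, hx, rfl⟩
    intro i _
    have h1 : |x i| ≤ R := le_trans (abs_coord_le_norm' x i) hx.2.le
    have h2 : |(g x i : ℝ)| * ε ≤ R := by
      rw [← abs_of_pos hε, ← abs_mul, ← hgx x hx i]; exact h1
    have h3 : |(g x i : ℝ)| ≤ R / ε := (le_div_iff₀ hε).mpr h2
    constructor
    · have h4 : (-N : ℝ) ≤ (g x i : ℝ) := by
        have : (N : ℝ) ≥ R / ε := Int.le_ceil _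
        push_cast
        linarith [(abs_le.mp h3).1]
      exact_mod_cast h4
    · have h4 : ((g x i : ℤ) : ℝ) ≤ (N : ℝ) := by
        have : (N : ℝ) ≥ R / ε := Int.le_ceil _
        linarith [(abs_le.mp h3).2]
      exact_mod_cast h4
  · intro x hx y hy hxy
    ext i
    rw [hgx x hx i, hgx y hy i, hxy]

lemma int_vec_sq_one {d : ℕ} (m : Fin d → ℤ) (h : ∑ i, m i ^ 2 = 1) :
    ∃ i, (m i = 1 ∨ m i = -1) ∧ ∀ j, j ≠ i → m j = 0 := by
  obtain ⟨i, hi⟩ : ∃ i, m i ≠ 0 := by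
    by_contra hc; push_neg at hc; simp [hc] at h
  have hub : m i ^ 2 ≤ 1 := by
    calc m i ^ 2 ≤ ∑ j, m j ^ 2 :=
          Finset.single_le_sum (fun j _ => sq_nonneg (m j)) (Finset.mem_univ i)
      _ = 1 := h
  have hlb : 1 ≤ m i ^ 2 := by
    rcases hi.lt_or_gt with h' | h' <;> nlinarith
  have hii : m i ^ 2 = 1 := le_antisymm hub hlb
  refine ⟨i, ?_, ?_⟩
  · rw [pow_two] at hii; exact mul_self_eq_one_iff.mp hii
  · intro j hj
    have hrest : ∑ j ∈ Finset.univ.erase i, m j ^ 2 = 0 := by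
      have h2 := Finset.add_sum_erase Finset.univ (fun j => m j ^ 2) (Finset.mem_univ i)
      rw [h] at h2
      omega
    have hz : m j ^ 2 = 0 := by
      have hmem : j ∈ Finset.univ.erase i := Finset.mem_erase.mpr ⟨hj, Finset.mem_univ j⟩
      exact (Finset.sum_eq_zero_iff_of_nonneg (fun j _ => sq_nonneg (m j))).mp hrest j hmem
    exact pow_eq_zero_iff (by norm_num) |>.mp hz

lemma lattice_nbr {d : ℕ} {ε : ℝ} (hε : 0 < ε) {x y : EuclideanSpace ℝ (Fin d)}
    (hx : x ∈ latticePts d ε) (hy : y ∈ latticePts d ε) (hxy : dist x y = ε) :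
    ∃ i : Fin d, y = x + ε • EuclideanSpace.single i (1:ℝ) ∨
      y = x - ε • EuclideanSpace.single i (1:ℝ) := by
  choose nx hnx using hx
  choose ny hny using hy
  set m : Fin d → ℤ := fun i => ny i - nx i with hm
  have hyi : ∀ i, y i - x i = (m i : ℝ) * ε := by
    intro i; rw [hnx i, hny i]; push_cast [hm]; ring
  have h2 : ∑ i, dist (x i) (y i) ^ 2 = ε ^ 2 := by
    have hnn : 0 ≤ ∑ i, dist (x i) (y i) ^ 2 := Finset.sum_nonneg fun i _ => sq_nonneg _
    have := hxy
    rw [EuclideanSpace.dist_eq] at this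
    nlinarith [Real.sq_sqrt hnn]
  have hd2 : (∑ i, (m i : ℝ) ^ 2) * ε ^ 2 = ε ^ 2 := by
    rw [Finset.sum_mul]
    calc ∑ i, (m i : ℝ) ^ 2 * ε ^ 2 = ∑ i, dist (x i) (y i) ^ 2 := by
          apply Finset.sum_congr rfl
          intro i _
          rw [Real.dist_eq, sq_abs]
          have h' := hyi i
          have h'' : x i - y i = -((m i : ℝ) * ε) := by linarith
          rw [h'']; ring
      _ = ε ^ 2 := h2
  have hdsum : ∑ i, m i ^ 2 = 1 := by
    have h3 : (∑ i, (m i : ℝ) ^ 2) = 1 := by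
      have hne : (ε : ℝ) ^ 2 ≠ 0 := by positivity
      field_simp at hd2; nlinarith [hd2]
    exact_mod_cast (by push_cast at h3 ⊢; exact h3 : ((∑ i, m i ^ 2 : ℤ) : ℝ) = 1)
  obtain ⟨i, hsign, hzero⟩ := int_vec_sq_one m hdsum
  refine ⟨i, ?_⟩
  have happ : ∀ (c : ℝ) (j : Fin d), (x + c • EuclideanSpace.single i (1:ℝ)) j
      = x j + c * (if j = i then (1:ℝ) else 0) := by
    intro c j
    simp [EuclideanSpace.single_apply]
  rcases hsign with h1 | h1
  · left
    ext j
    rw [happ]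
    by_cases hji : j = i
    · subst hji
      have := hyi j
      have hmj : (m j : ℝ) = 1 := by exact_mod_cast h1
      rw [hmj] at this; simp; linarith
    · have := hyi j
      have hmj : (m j : ℝ) = 0 := by exact_mod_cast hzero j hji
      rw [hmj] at this; simp [hji]; linarith
  · right
    ext j
    have happ' : (x - ε • EuclideanSpace.single i (1:ℝ)) j
        = x j - ε * (if j = i then (1:ℝ) else 0) := by
      simp [EuclideanSpace.single_apply]
    rw [happ']
    by_cases hji : j = i
    · subst hji
      have := hyi j
      have hmj : (m j : ℝ) = -1 := by exact_mod_cast h1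
      rw [hmj] at this; simp; linarith
    · have := hyi j
      have hmj : (m j : ℝ) = 0 := by exact_mod_cast hzero j hji
      rw [hmj] at this; simp [hji]; linarith


set_option maxHeartbeats 2000000 in
lemma one_le_mul_dirForm {d : ℕ} {Ω : Set (EuclideanSpace ℝ (Fin d))} (hd : 2 ≤ d)
    (S : BoundarySetup d Ω) {R : ℝ} (hRpos : 0 < R) (hΩb : Ω ⊆ Metric.ball 0 R)
    {ε : ℝ} (hε : 0 < ε) (hε1 : ε < 1) (hεR : ε ≤ R)
    {f : EuclideanSpace ℝ (Fin d) → ℝ}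
    (hf : ε ^ d * (∑ᶠ x ∈ discDomain Ω ε, f x ^ 2) = 1) :
    1 ≤ (6 * R * S.C₀ + 36 * R ^ 2) * dirForm S ε 1 f := by
  have hεIoo : ε ∈ Set.Ioo (0:ℝ) 1 := ⟨hε, hε1⟩
  have hC₀ := S.one_le_C₀
  have hC₀pos : (0:ℝ) < S.C₀ := lt_of_lt_of_le one_pos hC₀
  have hi₀ : (0:ℕ) < d := by omega
  set i₀ : Fin d := ⟨0, hi₀⟩
  set w : EuclideanSpace ℝ (Fin d) := ε • EuclideanSpace.single i₀ 1 with hw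
  have hwnorm : ‖w‖ = ε := by
    rw [hw, norm_smul, EuclideanSpace.norm_single]
    simp [Real.norm_eq_abs, abs_of_pos hε]
  have hwdist : ∀ z : EuclideanSpace ℝ (Fin d), dist z (z + w) = ε := by
    intro z
    rw [dist_eq_norm]
    have h' : z - (z + w) = -w := by abel
    rw [h', norm_neg, hwnorm]
  set D := discDomain Ω ε with hDdef
  have hDΩ : D ⊆ Ω := fun x hx => (connectedComponentIn_subset _ _ hx.1).1
  have hDlat : D ⊆ latticePts d ε := fun x hx => hx.2
  have hDball : ∀ x ∈ D, ‖x‖ < R := by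
    intro x hx
    have := hΩb (hDΩ hx)
    rwa [Metric.mem_ball, dist_zero_right] at this
  have hDfin : D.Finite := (lattice_bounded_finite (R := R) hε).subset
      (fun x hx => ⟨hDlat hx, hDball x hx⟩)
  have hnsmul : ∀ (n : ℕ), ‖(n • w : EuclideanSpace ℝ (Fin d))‖ = (n:ℝ) * ε := by
    intro n
    rw [← Nat.cast_smul_eq_nsmul ℝ, norm_smul, hwnorm]
    simp
  have hesc : ∀ x : EuclideanSpace ℝ (Fin d), ∃ kk : ℕ, x + kk • w ∉ D := by
    intro x
    refine ⟨⌈(R + ‖x‖) / ε⌉₊ + 1, fun hmem => ?_⟩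
    set kk := ⌈(R + ‖x‖) / ε⌉₊ + 1 with hkk
    have h1 : (kk : ℝ) * ε ≤ ‖x + kk • w‖ + ‖x‖ := by
      calc (kk:ℝ) * ε = ‖(x + kk • w) - x‖ := by
            rw [show (x + kk • w) - x = kk • w by abel, hnsmul]
        _ ≤ ‖x + kk • w‖ + ‖x‖ := norm_sub_le _ _
    have h2 : R + ‖x‖ < (kk : ℝ) * ε := by
      have hlt : (R + ‖x‖) / ε < (kk : ℝ) := by
        have hle : (R + ‖x‖)/ε ≤ (⌈(R + ‖x‖) / ε⌉₊ : ℝ) := Nat.le_ceil _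
        rw [hkk]; push_cast; linarith
      calc R + ‖x‖ = ((R + ‖x‖)/ε) * ε := by field_simp
        _ < kk * ε := by exact mul_lt_mul_of_pos_right hlt hε
    have h3 : ‖x + kk • w‖ < R := hDball _ hmem
    linarith [norm_nonneg x]
  set m : EuclideanSpace ℝ (Fin d) → ℕ := fun x => Nat.find (hesc x) with hm
  set k : EuclideanSpace ℝ (Fin d) → ℕ := fun x => m x - 1 with hk
  set b : EuclideanSpace ℝ (Fin d) → EuclideanSpace ℝ (Fin d) :=
    fun x => x + k x • w with hb
  have hmem_lt : ∀ x, ∀ j, j < m x → x + j • w ∈ D := by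
    intro x j hj
    by_contra hc
    exact absurd hc (by simpa using Nat.find_min (hesc x) hj)
  have hm_pos : ∀ x ∈ D, 1 ≤ m x := by
    intro x hx
    rcases Nat.eq_zero_or_pos (m x) with h | h
    · exfalso
      have hspec : x + m x • w ∉ D := Nat.find_spec (hesc x)
      rw [h] at hspec
      simp only [zero_smul, add_zero] at hspec
      exact hspec hx
    · exact h
  have hkx : ∀ x, k x = m x - 1 := fun _ => rfl
  have hkm : ∀ x ∈ D, k x + 1 = m x := by
    intro x hx
    have h1 := hm_pos x hx
    have h2 := hkx x
    omega
  have hbD : ∀ x ∈ D, b x ∈ D := by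
    intro x hx
    have h1 := hkm x hx
    have h2 : k x < m x := by omega

    exact hmem_lt x (k x) h2
  have hbout : ∀ x ∈ D, b x + w ∉ D := by
    intro x hx
    have h1 : b x + w = x + m x • w := by
      rw [hb]; simp only
      rw [← hkm x hx, succ_nsmul, add_assoc]
    rw [h1]
    exact (Nat.find_spec (hesc x) : x + m x • w ∉ D)
  set K := ⌊2 * R / ε⌋₊ with hK
  have hkK : ∀ x ∈ D, k x ≤ K := by
    intro x hx
    apply Nat.le_floor
    have h1 : ‖b x - x‖ = (k x : ℝ) * ε := by
      rw [hb]; simp only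
      rw [show x + k x • w - x = (k x) • w by abel, hnsmul]
    have h2 : (k x : ℝ) * ε ≤ ‖b x‖ + ‖x‖ := by
      rw [← h1]; exact norm_sub_le _ _
    have h3 : ‖b x‖ < R := hDball _ (hbD x hx)
    have h4 : ‖x‖ < R := hDball x hx
    rw [le_div_iff₀ hε]
    linarith
  have hK3 : (K : ℝ) + 1 ≤ 3 * R / ε := by
    have h1 : (K:ℝ) ≤ 2*R/ε := Nat.floor_le (by positivity)
    have h2 : (1:ℝ) ≤ R/ε := (one_le_div hε).mpr hεR
    have h3 : 3*R/ε = 2*R/ε + R/ε := by ring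
    linarith
  have hbbd : ∀ x ∈ D, b x ∈ innerBdry Ω ε := by
    intro x hx
    refine ⟨hbD x hx, ?_⟩
    set T : Finset (EuclideanSpace ℝ (Fin d)) :=
      ((Finset.univ.image (fun i : Fin d => b x + ε • EuclideanSpace.single i 1)) ∪
       (Finset.univ.image (fun i : Fin d => b x - ε • EuclideanSpace.single i 1))).erase
        (b x + w) with hT
    have hsub : {y ∈ discDomain Ω ε | dist (b x) y = ε} ⊆ ↑T := by
      rintro y ⟨hyD, hyd⟩
      apply Finset.mem_coe.mpr
      rw [hT, Finset.mem_erase]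
      constructor
      · intro h
        exact hbout x hx (h ▸ hyD)
      · obtain ⟨i, hi | hi⟩ := lattice_nbr hε (hDlat (hbD x hx)) (hDlat hyD) hyd
        · exact Finset.mem_union_left _ (Finset.mem_image.mpr ⟨i, Finset.mem_univ i, hi.symm⟩)
        · exact Finset.mem_union_right _ (Finset.mem_image.mpr ⟨i, Finset.mem_univ i, hi.symm⟩)
    have hTcard : T.card ≤ 2 * d - 1 := by
      have hmemw : b x + w ∈
          ((Finset.univ.image (fun i : Fin d => b x + ε • EuclideanSpace.single i 1)) ∪
           (Finset.univ.image (fun i : Fin d => b x - ε • EuclideanSpace.single i 1))) := by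
        apply Finset.mem_union_left
        exact Finset.mem_image.mpr ⟨i₀, Finset.mem_univ _, by rw [hw]⟩
      rw [hT, Finset.card_erase_of_mem hmemw]
      have hcu := Finset.card_union_le
        (Finset.univ.image (fun i : Fin d => b x + ε • EuclideanSpace.single i 1))
        (Finset.univ.image (fun i : Fin d => b x - ε • EuclideanSpace.single i 1))
      have h1 : (Finset.univ.image
          (fun i : Fin d => b x + ε • EuclideanSpace.single i 1)).card ≤ d :=
        le_trans Finset.card_image_le (by simp)
      have h2 : (Finset.univ.image
          (fun i : Fin d => b x - ε • EuclideanSpace.single i 1)).card ≤ d :=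
        le_trans Finset.card_image_le (by simp)
      omega
    calc ({y ∈ discDomain Ω ε | dist (b x) y = ε}).ncard ≤ T.card := by
          rw [← Set.ncard_coe_finset]
          exact Set.ncard_le_ncard hsub T.finite_toSet
      _ < 2 * d := by omega
  -- Finsets
  have hIBsub : innerBdry Ω ε ⊆ D := fun y hy => hy.1
  have hIBfin : (innerBdry Ω ε).Finite := hDfin.subset hIBsub
  have hNfin : ∀ x : EuclideanSpace ℝ (Fin d), ({y ∈ discDomain Ω ε | dist x y = ε}).Finite :=
    fun x => hDfin.subset (fun y hy => hy.1)
  set FD := hDfin.toFinset with hFD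
  set FB := hIBfin.toFinset with hFB
  set Δ : EuclideanSpace ℝ (Fin d) → ℝ := fun y => f (y + w) - f y with hΔ
  set Sf := ∑ x ∈ FD, f x ^ 2 with hSf
  set SB := ∑ y ∈ FB, S.α ε y * f y ^ 2 with hSB
  set SB' := ∑ y ∈ FB, f y ^ 2 with hSB'
  set SG := ∑ x ∈ FD, ∑ y ∈ (hNfin x).toFinset, (f y - f x) ^ 2 with hSG
  have hSBnn : 0 ≤ SB := by
    apply Finset.sum_nonneg
    intro y hy
    have hyB : y ∈ innerBdry Ω ε := (Set.Finite.mem_toFinset hIBfin).mp hy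
    obtain ⟨hα1, _⟩ := S.α_bounds ε hεIoo y hyB
    have hαnn : 0 ≤ S.α ε y := le_trans (by positivity) hα1
    exact mul_nonneg hαnn (sq_nonneg _)
  have hSGnn : 0 ≤ SG :=
    Finset.sum_nonneg fun x _ => Finset.sum_nonneg fun y _ => sq_nonneg _
  have hSB'nn : 0 ≤ SB' := Finset.sum_nonneg fun y _ => sq_nonneg _
  -- pointwise estimate
  have hpt : ∀ x ∈ FD, f x ^ 2 ≤ 2 * f (b x) ^ 2
      + (2 * ((K:ℝ)+1)) * ∑ j ∈ Finset.range (k x), Δ (x + j • w) ^ 2 := by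
    intro x hxF
    have hx : x ∈ D := (Set.Finite.mem_toFinset hDfin).mp hxF
    have htel : ∑ j ∈ Finset.range (k x), (f (x + (j+1) • w) - f (x + j • w))
        = f (x + k x • w) - f (x + 0 • w) :=
      Finset.sum_range_sub (fun j => f (x + j • w)) (k x)
    have hstep : ∀ j : ℕ, f (x + (j+1) • w) - f (x + j • w) = Δ (x + j • w) := by
      intro j
      rw [hΔ]; simp only
      congr 2
      rw [succ_nsmul, add_assoc]
    have hfx : f x = f (b x) - ∑ j ∈ Finset.range (k x), Δ (x + j • w) := by
      have h1 : ∑ j ∈ Finset.range (k x), Δ (x + j • w) = f (b x) - f x := by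
        rw [← Finset.sum_congr rfl (fun j _ => hstep j), htel]
        simp only [zero_smul, add_zero]
        rfl
      linarith
    have hCS : (∑ j ∈ Finset.range (k x), Δ (x + j • w)) ^ 2
        ≤ (k x : ℝ) * ∑ j ∈ Finset.range (k x), Δ (x + j • w) ^ 2 := by
      have := sq_sum_le_card_mul_sum_sq (s := Finset.range (k x))
        (f := fun j => Δ (x + j • w))
      simpa using this
    have hknn : (k x : ℝ) ≤ (K:ℝ) + 1 := by
      have h' := hkK x hx
      have : (k x : ℝ) ≤ (K : ℝ) := by exact_mod_cast h'
      linarith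
    have hsumnn : 0 ≤ ∑ j ∈ Finset.range (k x), Δ (x + j • w) ^ 2 :=
      Finset.sum_nonneg fun _ _ => sq_nonneg _
    rw [hfx]
    nlinarith [hCS, sq_nonneg (f (b x) + ∑ j ∈ Finset.range (k x), Δ (x + j • w)),
      mul_le_mul_of_nonneg_right hknn hsumnn]
  have hsum1 : Sf ≤ 2 * (∑ x ∈ FD, f (b x) ^ 2)
      + (2 * ((K:ℝ)+1)) * ∑ x ∈ FD, ∑ j ∈ Finset.range (k x), Δ (x + j • w) ^ 2 := by
    have h' := Finset.sum_le_sum hpt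
    rw [hSf]
    calc ∑ x ∈ FD, f x ^ 2
        ≤ ∑ x ∈ FD, (2 * f (b x) ^ 2
            + (2 * ((K:ℝ)+1)) * ∑ j ∈ Finset.range (k x), Δ (x + j • w) ^ 2) := h'
      _ = 2 * (∑ x ∈ FD, f (b x) ^ 2)
          + (2 * ((K:ℝ)+1)) * ∑ x ∈ FD, ∑ j ∈ Finset.range (k x), Δ (x + j • w) ^ 2 := by
          rw [Finset.sum_add_distrib, Finset.mul_sum, Finset.mul_sum]
  -- Claim A
  have hA : ∑ x ∈ FD, f (b x) ^ 2 ≤ ((K:ℝ)+1) * SB' := by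
    set φ : EuclideanSpace ℝ (Fin d) → EuclideanSpace ℝ (Fin d) × ℕ :=
      fun x => (b x, k x) with hφ
    have hinj : ∀ x ∈ FD, ∀ y ∈ FD, φ x = φ y → x = y := by
      intro x _ y _ hxy
      have h1 : b x = b y := congrArg Prod.fst hxy
      have h2 : k x = k y := congrArg Prod.snd hxy
      rw [hb] at h1
      simp only at h1
      rw [h2] at h1
      exact add_right_cancel h1
    have himg : FD.image φ ⊆ FB ×ˢ Finset.range (K+1) := by
      intro p hp
      obtain ⟨x, hx, rfl⟩ := Finset.mem_image.mp hp
      have hxD : x ∈ D := (Set.Finite.mem_toFinset hDfin).mp hx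
      refine Finset.mem_product.mpr ⟨?_, ?_⟩
      · exact (Set.Finite.mem_toFinset hIBfin).mpr (hbbd x hxD)
      · exact Finset.mem_range.mpr (Nat.lt_succ_of_le (hkK x hxD))
    calc ∑ x ∈ FD, f (b x) ^ 2 = ∑ p ∈ FD.image φ, f p.1 ^ 2 := by
          rw [Finset.sum_image hinj]
      _ ≤ ∑ p ∈ FB ×ˢ Finset.range (K+1), f p.1 ^ 2 :=
          Finset.sum_le_sum_of_subset_of_nonneg himg (fun _ _ _ => sq_nonneg _)
      _ = ∑ y ∈ FB, ∑ _j ∈ Finset.range (K+1), f y ^ 2 := by rw [Finset.sum_product]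
      _ = ∑ y ∈ FB, ((K:ℝ)+1) * f y ^ 2 := by
          apply Finset.sum_congr rfl
          intro y _
          rw [Finset.sum_const, Finset.card_range, nsmul_eq_mul]
          push_cast; ring
      _ = ((K:ℝ)+1) * SB' := by rw [← Finset.mul_sum]
  -- Claim B
  have hBclaim : ∑ x ∈ FD, ∑ j ∈ Finset.range (k x), Δ (x + j • w) ^ 2
      ≤ ((K:ℝ)+1) * SG := by
    set FD' := FD.filter (fun y => y + w ∈ D) with hFD'
    have hstep1 : ∑ x ∈ FD, ∑ j ∈ Finset.range (k x), Δ (x + j • w) ^ 2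
        ≤ ((K:ℝ)+1) * ∑ y ∈ FD', Δ y ^ 2 := by
      set ψ : (Σ _x : EuclideanSpace ℝ (Fin d), ℕ) → EuclideanSpace ℝ (Fin d) × ℕ :=
        fun p => (p.1 + p.2 • w, p.2) with hψ
      have hre : ∑ x ∈ FD, ∑ j ∈ Finset.range (k x), Δ (x + j • w) ^ 2
          = ∑ p ∈ FD.sigma (fun x => Finset.range (k x)), Δ (p.1 + p.2 • w) ^ 2 := by
        rw [Finset.sum_sigma]
      have hinj : ∀ p ∈ FD.sigma (fun x => Finset.range (k x)),
          ∀ q ∈ FD.sigma (fun x => Finset.range (k x)), ψ p = ψ q → p = q := by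
        intro p _ q _ hpq
        have h2 : p.2 = q.2 := congrArg Prod.snd hpq
        have h1 : p.1 + p.2 • w = q.1 + q.2 • w := congrArg Prod.fst hpq
        rw [h2] at h1
        have h3 : p.1 = q.1 := add_right_cancel h1
        exact Sigma.ext h3 (heq_of_eq h2)
      have himg : (FD.sigma fun x => Finset.range (k x)).image ψ
          ⊆ FD' ×ˢ Finset.range (K+1) := by
        intro q hq
        obtain ⟨p, hp, rfl⟩ := Finset.mem_image.mp hq
        obtain ⟨hp1, hp2⟩ := Finset.mem_sigma.mp hp
        have hxD : p.1 ∈ D := (Set.Finite.mem_toFinset hDfin).mp hp1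
        have hj : p.2 < k p.1 := Finset.mem_range.mp hp2
        have hmx := hkm p.1 hxD
        have hin1 : p.1 + p.2 • w ∈ D := hmem_lt p.1 p.2 (by omega)
        have hin2 : (p.1 + p.2 • w) + w ∈ D := by
          have h' : p.1 + (p.2+1) • w ∈ D := hmem_lt p.1 (p.2+1) (by omega)
          rwa [succ_nsmul, ← add_assoc] at h'
        refine Finset.mem_product.mpr ⟨?_, ?_⟩
        · rw [hFD', Finset.mem_filter]
          exact ⟨(Set.Finite.mem_toFinset hDfin).mpr hin1, hin2⟩
        · refine Finset.mem_range.mpr ?_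
          show p.2 < K + 1
          have := hkK p.1 hxD
          omega
      calc ∑ x ∈ FD, ∑ j ∈ Finset.range (k x), Δ (x + j • w) ^ 2
          = ∑ p ∈ FD.sigma (fun x => Finset.range (k x)), Δ (p.1 + p.2 • w) ^ 2 := by
            rw [Finset.sum_sigma]
        _ = ∑ q ∈ (FD.sigma fun x => Finset.range (k x)).image ψ, Δ q.1 ^ 2 := by
            rw [Finset.sum_image hinj]
        _ ≤ ∑ q ∈ FD' ×ˢ Finset.range (K+1), Δ q.1 ^ 2 :=
            Finset.sum_le_sum_of_subset_of_nonneg himg (fun _ _ _ => sq_nonneg _)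
        _ = ∑ y ∈ FD', ∑ _j ∈ Finset.range (K+1), Δ y ^ 2 := by rw [Finset.sum_product]
        _ = ∑ y ∈ FD', ((K:ℝ)+1) * Δ y ^ 2 := by
            apply Finset.sum_congr rfl
            intro y _
            rw [Finset.sum_const, Finset.card_range, nsmul_eq_mul]
            push_cast; ring
        _ = ((K:ℝ)+1) * ∑ y ∈ FD', Δ y ^ 2 := by rw [← Finset.mul_sum]
    have hstep2 : ∑ y ∈ FD', Δ y ^ 2 ≤ SG := by
      have h1 : ∀ y ∈ FD', Δ y ^ 2 ≤ ∑ z ∈ (hNfin y).toFinset, (f z - f y) ^ 2 := by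
        intro y hy
        obtain ⟨hyF, hyw⟩ := Finset.mem_filter.mp hy
        have hmemN : y + w ∈ (hNfin y).toFinset :=
          (Set.Finite.mem_toFinset _).mpr ⟨hyw, hwdist y⟩
        have h' := Finset.single_le_sum (f := fun z => (f z - f y) ^ 2)
          (fun z _ => sq_nonneg _) hmemN
        simpa [hΔ] using h'
      calc ∑ y ∈ FD', Δ y ^ 2 ≤ ∑ y ∈ FD', ∑ z ∈ (hNfin y).toFinset, (f z - f y) ^ 2 :=
            Finset.sum_le_sum h1
        _ ≤ SG := Finset.sum_le_sum_of_subset_of_nonneg (Finset.filter_subset _ _)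
            (fun _ _ _ => Finset.sum_nonneg fun _ _ => sq_nonneg _)
    calc ∑ x ∈ FD, ∑ j ∈ Finset.range (k x), Δ (x + j • w) ^ 2
        ≤ ((K:ℝ)+1) * ∑ y ∈ FD', Δ y ^ 2 := hstep1
      _ ≤ ((K:ℝ)+1) * SG := by
          apply mul_le_mul_of_nonneg_left hstep2 (by positivity)
  -- boundary comparison
  have hSB'le : SB' ≤ S.C₀ * SB := by
    rw [hSB, hSB', Finset.mul_sum]
    apply Finset.sum_le_sum
    intro y hy
    have hyB : y ∈ innerBdry Ω ε := (Set.Finite.mem_toFinset hIBfin).mp hy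
    obtain ⟨hα1, _⟩ := S.α_bounds ε hεIoo y hyB
    have hC₀pos : (0:ℝ) < S.C₀ := by linarith
    have h1 : 1 ≤ S.C₀ * S.α ε y := by
      have h' := mul_le_mul_of_nonneg_left hα1 hC₀pos.le
      rwa [mul_inv_cancel₀ hC₀pos.ne'] at h'
    nlinarith [sq_nonneg (f y)]
  -- dirForm identification
  have hr2 : (ε : ℝ) ^ (-2:ℝ) = (ε ^ 2)⁻¹ := by
    rw [show (-2:ℝ) = -((2:ℕ):ℝ) by norm_num, Real.rpow_neg hε.le, Real.rpow_natCast]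
  have hdf : dirForm S ε 1 f = ε ^ d / 2 * ((ε ^ 2)⁻¹ * SG) + (ε ^ d / ε) * SB := by
    rw [dirForm]
    have hT2 : ∑ᶠ x ∈ innerBdry Ω ε, S.α ε x * f x ^ 2 = SB :=
      finsum_mem_eq_sum' _ hIBfin
    have hT1 : ∑ᶠ x ∈ discDomain Ω ε,
        ∑ᶠ y ∈ {y ∈ discDomain Ω ε | dist x y = ε}, ε ^ (-2:ℝ) * (f y - f x) ^ 2
        = (ε ^ 2)⁻¹ * SG := by
      rw [finsum_mem_eq_sum' _ hDfin, hSG, Finset.mul_sum]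
      apply Finset.sum_congr rfl
      intro x _
      rw [finsum_mem_eq_sum' _ (hNfin x), Finset.mul_sum]
      apply Finset.sum_congr rfl
      intro y _
      rw [hr2]
    rw [hT1, hT2]
    have h1 : (ε:ℝ) ^ ((1:ℝ) - 1) = 1 := by
      norm_num
    have h2 : (ε:ℝ) ^ ((d:ℝ) - 1) = ε ^ d / ε := by
      rw [Real.rpow_sub hε, Real.rpow_natCast, Real.rpow_one]
    rw [h1, h2]
    ring
  -- final arithmetic
  have hSfval : ε ^ d * Sf = 1 := by
    rw [← hf, hSf]
    congr 1
    exact (finsum_mem_eq_sum' _ hDfin).symm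
  set κR : ℝ := (K:ℝ) + 1 with hκR
  have hκnn : (0:ℝ) ≤ κR := by positivity
  have e0 : ∑ x ∈ FD, f (b x) ^ 2 ≤ κR * (S.C₀ * SB) :=
    le_trans hA (mul_le_mul_of_nonneg_left hSB'le hκnn)
  have e0' : (2 * κR) * (∑ x ∈ FD, ∑ j ∈ Finset.range (k x), Δ (x + j • w) ^ 2)
      ≤ (2 * κR) * (κR * SG) :=
    mul_le_mul_of_nonneg_left hBclaim (by positivity)
  have e1 : Sf ≤ 2 * κR * S.C₀ * SB + 2 * κR ^ 2 * SG := by nlinarith [hsum1, e0, e0']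
  have hεd : (0:ℝ) < ε ^ d := by positivity
  have e2 : 1 ≤ ε ^ d * (2 * κR * S.C₀ * SB) + ε ^ d * (2 * κR ^ 2 * SG) := by
    have h' := mul_le_mul_of_nonneg_left e1 hεd.le
    rw [hSfval] at h'
    nlinarith [h']
  set P1 : ℝ := ε ^ d / 2 * ((ε ^ 2)⁻¹ * SG) with hP1
  set P2 : ℝ := (ε ^ d / ε) * SB with hP2
  have hP1nn : 0 ≤ P1 :=
    mul_nonneg (by positivity) (mul_nonneg (by positivity) hSGnn)
  have hP2nn : 0 ≤ P2 := mul_nonneg (by positivity) hSBnn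
  have e3 : ε ^ d * (2 * κR * S.C₀ * SB) ≤ 6 * R * S.C₀ * P2 := by
    have h1 : 2 * κR ≤ 6 * R / ε := by
      rw [show (6:ℝ) * R / ε = 2 * (3 * R / ε) by ring]
      linarith [hK3]
    have h2 : 0 ≤ ε ^ d * (S.C₀ * SB) :=
      mul_nonneg (by positivity) (mul_nonneg hC₀pos.le hSBnn)
    calc ε ^ d * (2 * κR * S.C₀ * SB) = (2 * κR) * (ε ^ d * (S.C₀ * SB)) := by ring
      _ ≤ (6 * R / ε) * (ε ^ d * (S.C₀ * SB)) := mul_le_mul_of_nonneg_right h1 h2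
      _ = 6 * R * S.C₀ * P2 := by rw [hP2]; field_simp
  have e4 : ε ^ d * (2 * κR ^ 2 * SG) ≤ 36 * R ^ 2 * P1 := by
    have h1 : κR ^ 2 ≤ (3 * R / ε) ^ 2 := by
      apply pow_le_pow_left₀ hκnn hK3
    have h2 : 0 ≤ ε ^ d * SG := mul_nonneg (by positivity) hSGnn
    calc ε ^ d * (2 * κR ^ 2 * SG) = (2 * κR ^ 2) * (ε ^ d * SG) := by ring
      _ ≤ (2 * (3 * R / ε) ^ 2) * (ε ^ d * SG) := by
          apply mul_le_mul_of_nonneg_right (by linarith) h2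
      _ = 36 * R ^ 2 * P1 := by rw [hP1]; field_simp; ring
  have e5 : 1 ≤ 6 * R * S.C₀ * P2 + 36 * R ^ 2 * P1 := by linarith
  have e6 : 6 * R * S.C₀ * P2 + 36 * R ^ 2 * P1
      ≤ (6 * R * S.C₀ + 36 * R ^ 2) * (P1 + P2) := by
    have c1 : (0:ℝ) ≤ 6 * R * S.C₀ := mul_nonneg (by positivity) hC₀pos.le
    have c2 : (0:ℝ) ≤ 36 * R ^ 2 := by positivity
    linarith [mul_nonneg c1 hP1nn, mul_nonneg c2 hP2nn]
  rw [hdf]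
  calc (1:ℝ) ≤ 6 * R * S.C₀ * P2 + 36 * R ^ 2 * P1 := e5
    _ ≤ (6 * R * S.C₀ + 36 * R ^ 2) * (P1 + P2) := e6
    _ = (6 * R * S.C₀ + 36 * R ^ 2) * (ε ^ d / 2 * ((ε ^ 2)⁻¹ * SG) + ε ^ d / ε * SB) := by
        rw [hP1, hP2]


lemma zero_mem_discDomain {d : ℕ} {Ω : Set (EuclideanSpace ℝ (Fin d))} (hd : 1 ≤ d)
    (h0 : (0 : EuclideanSpace ℝ (Fin d)) ∈ Ω) {ε : ℝ} (hε : 0 < ε) :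
    (0 : EuclideanSpace ℝ (Fin d)) ∈ discDomain Ω ε := by
  have hi₀ : (0:ℕ) < d := hd
  set i₀ : Fin d := ⟨0, hi₀⟩
  set w : EuclideanSpace ℝ (Fin d) := ε • EuclideanSpace.single i₀ 1 with hw
  have h0lat : (0 : EuclideanSpace ℝ (Fin d)) ∈ latticePts d ε := by
    intro i; exact ⟨0, by simp⟩
  have hwlat : w ∈ latticePts d ε := by
    intro i
    refine ⟨if i = i₀ then 1 else 0, ?_⟩
    have : w i = ε * (if i = i₀ then (1:ℝ) else 0) := by
      simp [hw, EuclideanSpace.single_apply]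
    rw [this]
    split <;> simp [mul_comm]
  have hdist : dist (0 : EuclideanSpace ℝ (Fin d)) w = ε := by
    rw [dist_zero_left, hw, norm_smul, EuclideanSpace.norm_single]
    simp [Real.norm_eq_abs, abs_of_pos hε]
  have hgrid : (0 : EuclideanSpace ℝ (Fin d)) ∈ gridSet d ε := by
    rw [gridSet]
    refine Set.mem_iUnion₂.mpr ⟨0, h0lat, ?_⟩
    refine Set.mem_iUnion₂.mpr ⟨w, hwlat, ?_⟩
    refine Set.mem_iUnion.mpr ⟨hdist, ?_⟩
    exact left_mem_segment ℝ _ _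
  exact ⟨mem_connectedComponentIn ⟨h0, hgrid⟩, h0lat⟩

lemma exists_normalized {d : ℕ} {Ω : Set (EuclideanSpace ℝ (Fin d))} (hd : 1 ≤ d)
    (h0 : (0 : EuclideanSpace ℝ (Fin d)) ∈ Ω) {ε : ℝ} (hε : 0 < ε)
    (hfin : (discDomain Ω ε).Finite) :
    ∃ f : EuclideanSpace ℝ (Fin d) → ℝ,
      ε ^ d * (∑ᶠ x ∈ discDomain Ω ε, f x ^ 2) = 1 := by
  set c : ℝ := (Real.sqrt (ε ^ d))⁻¹ with hc
  refine ⟨fun x => if x = 0 then c else 0, ?_⟩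
  have h1 : ∑ᶠ x ∈ discDomain Ω ε, (if x = (0:EuclideanSpace ℝ (Fin d)) then c else 0) ^ 2
      = c ^ 2 := by
    rw [finsum_mem_eq_sum' _ hfin]
    have h2 : ∀ x, ((if x = (0:EuclideanSpace ℝ (Fin d)) then c else 0) ^ 2)
        = if x = (0:EuclideanSpace ℝ (Fin d)) then c ^ 2 else 0 := by
      intro x; split <;> simp
    rw [Finset.sum_congr rfl (fun x _ => h2 x), Finset.sum_ite_eq' _ _ (fun _ => c ^ 2)]
    rw [if_pos ((Set.Finite.mem_toFinset hfin).mpr (zero_mem_discDomain hd h0 hε))]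
  rw [h1, hc]
  have hεd : (0:ℝ) < ε ^ d := by positivity
  rw [inv_pow, Real.sq_sqrt hεd.le]
  field_simp

lemma discDomain_finite {d : ℕ} {Ω : Set (EuclideanSpace ℝ (Fin d))} {R ε : ℝ}
    (hΩb : Ω ⊆ Metric.ball 0 R) (hε : 0 < ε) : (discDomain Ω ε).Finite := by
  apply (lattice_bounded_finite (R := R) hε).subset
  intro x hx
  refine ⟨hx.2, ?_⟩
  have := hΩb (connectedComponentIn_subset _ _ hx.1).1
  rwa [Metric.mem_ball, dist_zero_right] at this

lemma dirForm_mono {d : ℕ} {Ω : Set (EuclideanSpace ℝ (Fin d))} (S : BoundarySetup d Ω)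
    {ε β : ℝ} (hε : 0 < ε) (hε1 : ε < 1) (hβ : β ≤ 1)
    (hfin : (discDomain Ω ε).Finite) (f : EuclideanSpace ℝ (Fin d) → ℝ) :
    dirForm S ε 1 f ≤ dirForm S ε β f := by
  have hεIoo : ε ∈ Set.Ioo (0:ℝ) 1 := ⟨hε, hε1⟩
  rw [dirForm, dirForm]
  apply add_le_add le_rfl
  have hIBfin : (innerBdry Ω ε).Finite := hfin.subset (fun y hy => hy.1)
  have hBnn : 0 ≤ ∑ᶠ x ∈ innerBdry Ω ε, S.α ε x * f x ^ 2 := by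
    rw [finsum_mem_eq_sum' _ hIBfin]
    apply Finset.sum_nonneg
    intro y hy
    have hyB : y ∈ innerBdry Ω ε := (Set.Finite.mem_toFinset hIBfin).mp hy
    obtain ⟨hα1, _⟩ := S.α_bounds ε hεIoo y hyB
    have hC₀pos : (0:ℝ) < S.C₀ := lt_of_lt_of_le one_pos S.one_le_C₀
    exact mul_nonneg (le_trans (inv_nonneg.mpr hC₀pos.le) hα1) (sq_nonneg _)
  have hTnn : 0 ≤ ε ^ ((d:ℝ) - 1) * ∑ᶠ x ∈ innerBdry Ω ε, S.α ε x * f x ^ 2 :=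
    mul_nonneg (Real.rpow_nonneg hε.le _) hBnn
  apply mul_le_mul_of_nonneg_right ?_ hTnn
  exact Real.rpow_le_rpow_of_exponent_ge hε hε1.le (by linarith)


/-- Uniform spectral gap in the Dirichlet and Robin regimes:
for all small `ε` and all `β ≤ 1`, `λ₀^{ε,β} ≥ λ₀^{ε,1} ≥ λ` for some `λ > 0`. -/
theorem uniform_spectral_gap_dirichlet_robin
    (d : ℕ) (hd : 2 ≤ d) (Ω : Set (EuclideanSpace ℝ (Fin d)))
    (hΩ : IsLipschitzDomain d Ω) (h0 : (0 : EuclideanSpace ℝ (Fin d)) ∈ Ω)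
    (S : BoundarySetup d Ω) :
    ∃ lam > (0:ℝ), ∃ ε₀ ∈ Set.Ioo (0:ℝ) 1, ∀ ε ∈ Set.Ioo (0:ℝ) ε₀, ∀ β : ℝ, β ≤ 1 →
      lam0 S ε 1 ≤ lam0 S ε β ∧ lam ≤ lam0 S ε 1 := by
  obtain ⟨_, _, hbdd, _⟩ := hΩ
  obtain ⟨R, hRpos, hΩb⟩ := hbdd.subset_ball_lt 0 0
  have hC₀ := S.one_le_C₀
  have hC₀pos : (0:ℝ) < S.C₀ := lt_of_lt_of_le one_pos hC₀
  set C : ℝ := 6 * R * S.C₀ + 36 * R ^ 2 with hC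
  have hCpos : 0 < C := by
    have h1 : 0 < 6 * R * S.C₀ := by positivity
    have h2 : 0 < 36 * R ^ 2 := by positivity
    linarith
  have hd1 : 1 ≤ d := by omega
  refine ⟨C⁻¹, inv_pos.mpr hCpos, min (1/2) R,
    ⟨lt_min (by norm_num) hRpos, lt_of_le_of_lt (min_le_left _ _) (by norm_num)⟩, ?_⟩
  intro ε hε β hβ
  have hε0 : 0 < ε := hε.1
  have hε1 : ε < 1 := by
    have := lt_of_lt_of_le hε.2 (min_le_left _ _)
    linarith
  have hεR : ε ≤ R := le_of_lt (lt_of_lt_of_le hε.2 (min_le_right _ _))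
  have hfin : (discDomain Ω ε).Finite := discDomain_finite hΩb hε0
  obtain ⟨f₀, hf₀⟩ := exists_normalized hd1 h0 hε0 hfin
  have key : ∀ g : EuclideanSpace ℝ (Fin d) → ℝ,
      ε ^ d * (∑ᶠ x ∈ discDomain Ω ε, g x ^ 2) = 1 → C⁻¹ ≤ dirForm S ε 1 g := by
    intro g hg
    have h1 := one_le_mul_dirForm hd S hRpos hΩb hε0 hε1 hεR hg
    rw [inv_eq_one_div, div_le_iff₀ hCpos]
    rw [hC]
    linarith [h1]
  have hlow : ∀ r ∈ {r : ℝ | ∃ f : EuclideanSpace ℝ (Fin d) → ℝ,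
      ε ^ d * (∑ᶠ x ∈ discDomain Ω ε, f x ^ 2) = 1 ∧ dirForm S ε 1 f = r}, C⁻¹ ≤ r := by
    rintro r ⟨g, hg, rfl⟩
    exact key g hg
  have hbddb : BddBelow {r : ℝ | ∃ f : EuclideanSpace ℝ (Fin d) → ℝ,
      ε ^ d * (∑ᶠ x ∈ discDomain Ω ε, f x ^ 2) = 1 ∧ dirForm S ε 1 f = r} :=
    ⟨C⁻¹, hlow⟩
  constructor
  · rw [lam0, lam0]
    refine le_csInf ⟨dirForm S ε β f₀, ⟨f₀, hf₀, rfl⟩⟩ ?_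
    rintro r ⟨g, hg, rfl⟩
    have h1 : sInf {r : ℝ | ∃ f : EuclideanSpace ℝ (Fin d) → ℝ,
        ε ^ d * (∑ᶠ x ∈ discDomain Ω ε, f x ^ 2) = 1 ∧ dirForm S ε 1 f = r}
        ≤ dirForm S ε 1 g := csInf_le hbddb ⟨g, hg, rfl⟩
    exact h1.trans (dirForm_mono S hε0 hε1 hβ hfin g)
  · rw [lam0]
    exact le_csInf ⟨dirForm S ε 1 f₀, ⟨f₀, hf₀, rfl⟩⟩ hlow


end
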